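/- Let d ≥ 2 and q with 0 ≤ q ≤ d−2 be integers, and let r̂, ω, W be real numbers with r̂ > 1, 0 ≤ ω ≤ r̂^d, and 0 < W ≤ √(r̂^(2q+2) − 1) · √(1 − ω/r̂^d). Then W ≤ α_{d,q} · (ω + r̂^d · W · √(1 − ω/r̂^d) / √(r̂^(2q+2) − 1)), where α_{d,q} = √((q+1)/d) · (d/(d−1−q))^((q+1−d)/(2(q+1))). -/

import Mathlib

lemma tangent_aux (p y : ℝ) (hp : 1 < p) (hy : 0 ≤ y) :
    y - 1 ≤ p⁻¹ * (p / (p - 1)) ^ (1 - p) * y ^ p := by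
  set c : ℝ := p / (p - 1) with hcdef
  have hp0 : 0 < p := by linarith
  have hc : 0 < c := div_pos hp0 (by linarith)
  have hyc : -1 ≤ y / c - 1 := by
    have : 0 ≤ y / c := div_nonneg hy hc.le
    linarith
  have h := one_add_mul_self_le_rpow_one_add hyc hp.le
  have h1 : (1 + (y / c - 1) : ℝ) = y / c := by ring
  rw [h1, Real.div_rpow hy hc.le] at h
  have hcp : (0:ℝ) < c ^ p := Real.rpow_pos_of_pos hc p
  have hkey : p⁻¹ * c ^ (1 - p) * y ^ p = p⁻¹ * c * (y ^ p / c ^ p) := by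
    rw [Real.rpow_sub hc, Real.rpow_one]
    field_simp
  have h3 : p⁻¹ * c * (1 + p * (y / c - 1)) = y - 1 := by
    rw [hcdef]
    have h4 : p - 1 ≠ 0 := by linarith
    field_simp
    ring
  calc y - 1 = p⁻¹ * c * (1 + p * (y / c - 1)) := h3.symm
    _ ≤ p⁻¹ * c * (y ^ p / c ^ p) :=
        mul_le_mul_of_nonneg_left h (mul_pos (inv_pos.mpr hp0) hc).le
    _ = p⁻¹ * c ^ (1 - p) * y ^ p := hkey.symm

lemma key_ineq (d q : ℕ) (hd : 2 ≤ d) (hq : q ≤ d - 2) (rh : ℝ) (hr : 1 < rh) :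
    Real.sqrt (rh ^ (2 * q + 2) - 1) ≤
      (Real.sqrt (((q : ℝ) + 1) / (d : ℝ)) *
        ((d : ℝ) / ((d : ℝ) - 1 - (q : ℝ))) ^
          (((q : ℝ) + 1 - (d : ℝ)) / (2 * ((q : ℝ) + 1)))) * rh ^ d := by
  have hr0 : (0:ℝ) < rh := by linarith
  have hqd : q + 2 ≤ d := by omega
  have hqdR : (q:ℝ) + 2 ≤ (d:ℝ) := by exact_mod_cast hqd
  set Q : ℝ := (q:ℝ)
  set D : ℝ := (d:ℝ)
  have hQ : 0 ≤ Q := Nat.cast_nonneg q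
  have hD : 0 < D := by linarith
  set p : ℝ := D / (Q + 1) with hpdef
  have hQ1 : (0:ℝ) < Q + 1 := by linarith
  have hp : 1 < p := by
    rw [hpdef, lt_div_iff₀ hQ1]; linarith
  have hp0 : (0:ℝ) < p := by linarith
  set X : ℝ := D / (D - 1 - Q) with hXdef
  have hDQ : (0:ℝ) < D - 1 - Q := by linarith
  have hX : 0 < X := div_pos hD hDQ
  have hcX : p / (p - 1) = X := by
    rw [hpdef, hXdef]
    have h1 : D - (Q+1) ≠ 0 := by intro h; nlinarith
    field_simp
    ring
  set e : ℝ := (Q + 1 - D) / (2 * (Q + 1)) with hedef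
  set α : ℝ := Real.sqrt ((Q + 1) / D) * X ^ e with hadef
  have hα : 0 < α := by
    apply mul_pos
    · exact Real.sqrt_pos.mpr (div_pos hQ1 hD)
    · exact Real.rpow_pos_of_pos hX e
  have hα2 : α ^ 2 = p⁻¹ * X ^ (1 - p) := by
    rw [hadef, mul_pow, ← Real.rpow_natCast (X ^ e) 2, ← Real.rpow_mul hX.le,
      Real.sq_sqrt (div_pos hQ1 hD).le]
    congr 1
    · rw [hpdef, inv_div]
    · congr 1
      rw [hedef, hpdef]
      push_cast
      field_simp
  have ht := tangent_aux p (rh ^ (2 * q + 2)) hp (by positivity)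
  rw [hcX] at ht
  have hyp : (rh ^ (2 * q + 2) : ℝ) ^ p = (rh ^ d) ^ 2 := by
    rw [← Real.rpow_natCast rh (2 * q + 2), ← Real.rpow_mul hr0.le]
    have : ((2 * q + 2 : ℕ) : ℝ) * p = ((2 * d : ℕ) : ℝ) := by
      rw [hpdef]; push_cast; field_simp; ring
    rw [this, Real.rpow_natCast, pow_mul']
  rw [hyp] at ht
  have hfin : rh ^ (2 * q + 2) - 1 ≤ (α * rh ^ d) ^ 2 := by
    rw [mul_pow, hα2]; linarith [ht]
  calc Real.sqrt (rh ^ (2 * q + 2) - 1) ≤ Real.sqrt ((α * rh ^ d) ^ 2) :=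
        Real.sqrt_le_sqrt hfin
    _ = α * rh ^ d := Real.sqrt_sq (by positivity)

/-- Thin-shell linear-in-mass inequality
`W ≤ α_{d,q} (ω + r̂^d W √(1 − ω/r̂^d)/√(r̂^(2q+2) − 1))` with
`α_{d,q} = √((q+1)/d) (d/(d−1−q))^((q+1−d)/(2(q+1)))`, for `0 ≤ q ≤ d−2`. -/
theorem thin_shell_W_linear_bound
    (d q : ℕ) (hd : 2 ≤ d) (hq : q ≤ d - 2) (rh ω W : ℝ)
    (hr : 1 < rh) (hω0 : 0 ≤ ω) (hωM : ω ≤ rh ^ d)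
    (hW0 : 0 < W)
    (hW : W ≤ Real.sqrt (rh ^ (2 * q + 2) - 1) * Real.sqrt (1 - ω / rh ^ d)) :
    W ≤ (Real.sqrt (((q : ℝ) + 1) / (d : ℝ)) *
        ((d : ℝ) / ((d : ℝ) - 1 - (q : ℝ))) ^
          (((q : ℝ) + 1 - (d : ℝ)) / (2 * ((q : ℝ) + 1)))) *
      (ω + rh ^ d * W * Real.sqrt (1 - ω / rh ^ d) /
        Real.sqrt (rh ^ (2 * q + 2) - 1)) := by
  have hqd : q + 2 ≤ d := by omega
  have hqdR : (q:ℝ) + 2 ≤ (d:ℝ) := by exact_mod_cast hqd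
  have hr0 : (0:ℝ) < rh := by linarith
  have hAα := key_ineq d q hd hq rh hr
  set M : ℝ := rh ^ d with hMdef
  have hM0 : 0 < M := pow_pos hr0 d
  set A : ℝ := Real.sqrt (rh ^ (2 * q + 2) - 1) with hAdef
  set s : ℝ := Real.sqrt (1 - ω / M) with hsdef
  have hA0 : 0 < A := by
    apply Real.sqrt_pos.mpr
    have : (1:ℝ) < rh ^ (2 * q + 2) := one_lt_pow₀ hr (by omega)
    linarith
  have hs0 : 0 ≤ s := Real.sqrt_nonneg _
  have hs1 : s ≤ 1 := Real.sqrt_le_one.mpr (by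
    have : 0 ≤ ω / M := div_nonneg hω0 hM0.le
    linarith)
  have hsq : s ^ 2 = 1 - ω / M := Real.sq_sqrt (by
    rw [sub_nonneg]
    exact (div_le_one hM0).mpr hωM)
  have hωeq : ω = M * (1 - s ^ 2) := by
    rw [hsq]
    field_simp
    ring
  set α : ℝ := Real.sqrt (((q : ℝ) + 1) / (d : ℝ)) *
      ((d : ℝ) / ((d : ℝ) - 1 - (q : ℝ))) ^
        (((q : ℝ) + 1 - (d : ℝ)) / (2 * ((q : ℝ) + 1))) with hαdef
  have hDQ : (0:ℝ) < (d:ℝ) - 1 - (q:ℝ) := by linarith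
  have hD0 : (0:ℝ) < (d:ℝ) := by linarith [Nat.cast_nonneg (α := ℝ) q]
  have hα0 : 0 < α := mul_pos
    (Real.sqrt_pos.mpr (div_pos (by positivity) hD0))
    (Real.rpow_pos_of_pos (div_pos hD0 hDQ) _)
  rw [show α * (ω + M * W * s / A) = α * ω + (α * M * s / A) * W from by ring]
  set K : ℝ := α * M * s / A with hKdef
  have hKA : K * A = α * M * s := by
    rw [hKdef]
    field_simp
  have hK0 : 0 ≤ K := by positivity
  have hαω : 0 ≤ α * ω := mul_nonneg hα0.le hω0
  rcases le_or_gt 1 K with h | h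
  · have : W ≤ K * W := le_mul_of_one_le_left hW0.le h
    linarith
  · have h1 : W * (1 - K) ≤ A * s * (1 - K) :=
      mul_le_mul_of_nonneg_right hW (by linarith)
    have hKAs : K * A * s = α * M * s ^ 2 := by rw [hKA]; ring
    have hAs : A * s ≤ α * M := by
      calc A * s ≤ A * 1 := mul_le_mul_of_nonneg_left hs1 hA0.le
        _ = A := mul_one A
        _ ≤ α * M := hAα
    have hαω2 : α * ω = α * M - α * M * s ^ 2 := by rw [hωeq]; ring
    nlinarith [h1, hKAs, hAs, hαω2]
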